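/- (Gradient with respect to the n-th step parameter of the development layer.) Fix d, m, N ∈ ℕ, a sequence x = (x_0, …, x_N) in ℝ^d with increments Δx_i := x_i − x_{i−1}, parameters θ ∈ (Matrix (Fin m) (Fin m) ℝ)^d, and 1 ≤ n ≤ N. Set m_n := M_θ(Δx_n) and E := exp(M_θ(Δx_{n+1})) * ⋯ * exp(M_θ(Δx_N)) (identity if n = N). Let ψ : Matrix (Fin m) (Fin m) ℝ → ℝ be such that ψ̃_n(w) := ψ(w * E) is differentiable at z_n(θ), and let G be the Frobenius gradient of ψ̃_n at z_n(θ), i.e. fderiv ℝ ψ̃_n (z_n(θ)) (Y) = trace(Gᵀ * Y) for all Y. Define φ : (Matrix (Fin m) (Fin m) ℝ)^d → ℝ by φ(ϑ) := ψ̃_n(z_{n−1}(θ) * exp(M_ϑ(Δx_n))). Then for every ξ = (ξ_1, …, ξ_d): fderiv ℝ φ θ (ξ) = Σ_{j=1}^d (Δx_n)^{(j)} · trace( ((d exp)_{m_nᵀ}(z_{n−1}(θ)ᵀ * G))ᵀ * ξ_j ); equivalently, the Frobenius gradient of φ at θ has j-th component (Δx_n)^{(j)} • (d exp)_{m_nᵀ}(z_{n−1}(θ)ᵀ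 * G). -/

import Mathlib

open scoped Matrix

attribute [local instance] Matrix.linftyOpNormedAddCommGroup Matrix.linftyOpNormedRing
  Matrix.linftyOpNormedAlgebra

/-- `M_θ v = ∑ j, v j • θ j`, the trainable linear map of the development layer. -/
noncomputable def devLayerM (d m : ℕ) (θ : Fin d → Matrix (Fin m) (Fin m) ℝ)
    (v : Fin d → ℝ) : Matrix (Fin m) (Fin m) ℝ :=
  ∑ j, v j • θ j

/-- The development layer output `z_n (θ) = exp (M_θ Δx_1) * ⋯ * exp (M_θ Δx_n)`
(ordered product, `z_0 = 1`), where `Δx_i = x i - x (i-1)`. -/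
noncomputable def devLayerZ (d m : ℕ) (x : ℕ → Fin d → ℝ) (n : ℕ)
    (θ : Fin d → Matrix (Fin m) (Fin m) ℝ) : Matrix (Fin m) (Fin m) ℝ :=
  ((List.range n).map
    (fun i => NormedSpace.exp (devLayerM d m θ (x (i + 1) - x i)))).prod

-- (helper lemmas)
open ContinuousLinearMap Finset

variable {𝔸 : Type*} [NormedRing 𝔸] [NormedAlgebra ℝ 𝔸] [CompleteSpace 𝔸]

/-- Candidate derivative of `x ^ k` at `A`. -/
noncomputable def powD (k : ℕ) (A : 𝔸) : 𝔸 →L[ℝ] 𝔸 :=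
  ∑ i ∈ Finset.range k, ContinuousLinearMap.mulLeftRight ℝ 𝔸 (A ^ i) (A ^ (k - 1 - i))

lemma powD_apply (k : ℕ) (A Y : 𝔸) :
    powD k A Y = ∑ i ∈ Finset.range k, A ^ i * Y * A ^ (k - 1 - i) := by
  simp [powD]

lemma hasFDerivAt_pow'' (k : ℕ) (A : 𝔸) :
    HasFDerivAt (fun x : 𝔸 => x ^ k) (powD k A) A := by
  induction k with
  | zero => simpa [powD] using hasFDerivAt_const (1 : 𝔸) A
  | succ k ih =>
      have h := ih.mul' (hasFDerivAt_id A)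
      have heq : (fun y : 𝔸 => y ^ k * _root_.id y) = fun x : 𝔸 => x ^ (k + 1) := by
        funext x; simp [← pow_succ]
      rw [show ((fun x : 𝔸 => x ^ k) * _root_.id) = fun y : 𝔸 => y ^ k * _root_.id y from rfl, heq] at h
      refine h.congr_fderiv (Eq.symm ?_)
      ext Y
      simp only [powD, ContinuousLinearMap.add_apply, ContinuousLinearMap.smul_apply,
        ContinuousLinearMap.sum_apply, mulLeftRight_apply, ContinuousLinearMap.smulRight_apply,
        ContinuousLinearMap.coe_id', id_eq, smul_eq_mul, op_smul_eq_mul]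
      rw [Finset.sum_range_succ, Finset.sum_mul]
      rw [add_comm]
      congr 1
      · simp
      · apply Finset.sum_congr rfl
        intro i hi
        rw [Finset.mem_range] at hi
        have h2 : k + 1 - 1 - i = k - 1 - i + 1 := by omega
        rw [h2, pow_succ, ← mul_assoc]

/-- `k`-th term of the derivative series of `exp`. -/
noncomputable def expD (k : ℕ) (A : 𝔸) : 𝔸 →L[ℝ] 𝔸 :=
  (k.factorial : ℝ)⁻¹ • powD k A

lemma norm_pow_le_one_mul (x : 𝔸) (i : ℕ) : ‖x ^ i‖ ≤ ‖(1 : 𝔸)‖ * ‖x‖ ^ i := by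
  induction i with
  | zero => simp
  | succ i ih =>
      calc ‖x ^ (i + 1)‖ = ‖x ^ i * x‖ := by rw [pow_succ]
        _ ≤ ‖x ^ i‖ * ‖x‖ := norm_mul_le _ _
        _ ≤ ‖(1 : 𝔸)‖ * ‖x‖ ^ i * ‖x‖ := by
            exact mul_le_mul_of_nonneg_right ih (norm_nonneg x)
        _ = ‖(1 : 𝔸)‖ * ‖x‖ ^ (i + 1) := by ring

lemma norm_expD_le {R : ℝ} (hR : 0 ≤ R) (k : ℕ) (x : 𝔸) (hx : ‖x‖ ≤ R) :
    ‖expD k x‖ ≤ (k.factorial : ℝ)⁻¹ * (k * (‖(1 : 𝔸)‖ ^ 2 * R ^ (k - 1))) := by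
  rw [expD]
  rw [norm_smul ((k.factorial : ℝ)⁻¹) (powD k x), Real.norm_eq_abs,
    abs_of_nonneg (by positivity)]
  refine mul_le_mul_of_nonneg_left ?_ (by positivity)
  rw [powD]
  refine le_trans (norm_sum_le _ _) ?_
  have hbound : ∀ i ∈ Finset.range k,
      ‖ContinuousLinearMap.mulLeftRight ℝ 𝔸 (x ^ i) (x ^ (k - 1 - i))‖ ≤
        ‖(1 : 𝔸)‖ ^ 2 * R ^ (k - 1) := by
    intro i hi
    rw [Finset.mem_range] at hi
    refine le_trans (ContinuousLinearMap.opNorm_mulLeftRight_apply_apply_le ℝ 𝔸 _ _) ?_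
    calc ‖x ^ i‖ * ‖x ^ (k - 1 - i)‖
        ≤ (‖(1 : 𝔸)‖ * ‖x‖ ^ i) * (‖(1 : 𝔸)‖ * ‖x‖ ^ (k - 1 - i)) := by
          exact mul_le_mul (norm_pow_le_one_mul x i) (norm_pow_le_one_mul x _)
            (norm_nonneg _) (by positivity)
      _ = ‖(1 : 𝔸)‖ ^ 2 * ‖x‖ ^ (k - 1) := by
          have h3 : ‖x‖ ^ i * ‖x‖ ^ (k - 1 - i) = ‖x‖ ^ (k - 1) := by
            rw [← pow_add]; congr 1; omega
          rw [← h3]; ring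
      _ ≤ ‖(1 : 𝔸)‖ ^ 2 * R ^ (k - 1) := by
          exact mul_le_mul_of_nonneg_left
            (pow_le_pow_left₀ (norm_nonneg x) hx _) (by positivity)
  refine le_trans (Finset.sum_le_sum hbound) ?_
  rw [Finset.sum_const, Finset.card_range, nsmul_eq_mul]

lemma summable_expD_bound (C R : ℝ) :
    Summable (fun k : ℕ => (k.factorial : ℝ)⁻¹ * (k * (C * R ^ (k - 1)))) := by
  rw [← summable_nat_add_iff 1]
  refine ((Real.summable_pow_div_factorial R).mul_left C).congr fun k => ?_
  have h1 : ((k.factorial : ℝ)) ≠ 0 := Nat.cast_ne_zero.2 k.factorial_ne_zero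
  rw [Nat.add_sub_cancel, Nat.factorial_succ]
  push_cast
  field_simp

lemma summable_expD (A : 𝔸) : Summable (fun k => expD k A) := by
  refine Summable.of_norm_bounded
    (summable_expD_bound (‖(1 : 𝔸)‖ ^ 2) ‖A‖) (fun k => norm_expD_le (norm_nonneg A) k A le_rfl)

theorem hasFDerivAt_exp' (A : 𝔸) :
    HasFDerivAt NormedSpace.exp (∑' k, expD k A) A := by
  have key : HasFDerivAt (fun y : 𝔸 => ∑' k : ℕ, (k.factorial : ℝ)⁻¹ • y ^ k)
      (∑' k, expD k A) A := by
    refine hasFDerivAt_tsum_of_isPreconnected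
      (summable_expD_bound (‖(1 : 𝔸)‖ ^ 2) (‖A‖ + 1))
      Metric.isOpen_ball (convex_ball (0 : 𝔸) (‖A‖ + 1)).isPreconnected
      (fun k x _ => (hasFDerivAt_pow'' k x).const_smul ((k.factorial : ℝ)⁻¹))
      (fun k x hx => ?_) (Metric.mem_ball_self (by positivity)) ?_ ?_
    · refine norm_expD_le (by positivity) k x ?_
      rw [Metric.mem_ball, dist_zero_right] at hx
      exact hx.le
    · exact NormedSpace.expSeries_summable' (𝕂 := ℝ) (0 : 𝔸)
    · rw [Metric.mem_ball, dist_zero_right]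
      linarith [norm_nonneg A]
  have : (fun y : 𝔸 => ∑' k : ℕ, (k.factorial : ℝ)⁻¹ • y ^ k) = NormedSpace.exp := by
    funext y
    rw [NormedSpace.exp_eq_tsum (𝕂 := ℝ)]
  rwa [this] at key

theorem fderiv_exp' (A : 𝔸) :
    fderiv ℝ NormedSpace.exp A = ∑' k, expD k A :=
  (hasFDerivAt_exp' A).fderiv

lemma fderiv_exp_apply (A Y : 𝔸) :
    fderiv ℝ NormedSpace.exp A Y = ∑' k, expD k A Y := by
  rw [fderiv_exp']
  exact ((ContinuousLinearMap.apply ℝ 𝔸 Y).map_tsum (summable_expD A))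

section MatrixPart

attribute [local instance] Matrix.linftyOpNormedAddCommGroup Matrix.linftyOpNormedRing
  Matrix.linftyOpNormedAlgebra

variable {m : ℕ}

local notation "Mat" => Matrix (Fin m) (Fin m) ℝ

lemma summable_apply (A Y : Mat) : Summable (fun k => expD k A Y) :=
  (summable_expD A).map (ContinuousLinearMap.apply ℝ Mat Y).toLinearMap.toAddMonoidHom
    (ContinuousLinearMap.apply ℝ Mat Y).continuous

lemma trace_expD_comm (k : ℕ) (A B Y : Mat) :
    (B * expD k A Y).trace = ((expD k Aᵀ Bᵀ)ᵀ * Y).trace := by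
  simp only [expD, ContinuousLinearMap.smul_apply, powD_apply]
  rw [Matrix.mul_smul, Matrix.transpose_smul, Matrix.smul_mul, Matrix.trace_smul,
    Matrix.trace_smul]
  congr 1
  rw [Finset.mul_sum, Matrix.transpose_sum, Finset.sum_mul, Matrix.trace_sum, Matrix.trace_sum]
  refine Finset.sum_congr rfl fun i _ => ?_
  simp only [Matrix.transpose_mul, Matrix.transpose_pow, Matrix.transpose_transpose]
  rw [show B * (A ^ i * Y * A ^ (k - 1 - i)) = B * A ^ i * Y * A ^ (k - 1 - i) by noncomm_ring,
    Matrix.trace_mul_comm]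
  congr 1
  noncomm_ring

lemma trace_fderiv_exp_comm (A B Y : Mat) :
    (B * fderiv ℝ NormedSpace.exp A Y).trace
      = ((fderiv ℝ NormedSpace.exp Aᵀ Bᵀ)ᵀ * Y).trace := by
  erw [fderiv_exp_apply, fderiv_exp_apply]
  classical
  let T1 : Mat →L[ℝ] ℝ := LinearMap.toContinuousLinearMap
    ((Matrix.traceLinearMap (Fin m) ℝ ℝ).comp (LinearMap.mulLeft ℝ B))
  let T2 : Mat →L[ℝ] ℝ := LinearMap.toContinuousLinearMap
    ((Matrix.traceLinearMap (Fin m) ℝ ℝ).comp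
      ((LinearMap.mulRight ℝ Y).comp (Matrix.transposeLinearEquiv (Fin m) (Fin m) ℝ ℝ).toLinearMap))
  have h1 : (B * (∑' k, expD k A Y)).trace = ∑' k, (B * expD k A Y).trace := by
    exact T1.map_tsum (summable_apply A Y)
  have h2 : ((∑' k, expD k Aᵀ Bᵀ)ᵀ * Y).trace = ∑' k, ((expD k Aᵀ Bᵀ)ᵀ * Y).trace := by
    exact T2.map_tsum (summable_apply Aᵀ Bᵀ)
  exact h1.trans ((tsum_congr fun k => trace_expD_comm k A B Y).trans h2.symm)

end MatrixPart

/-- Gradient with respect to the `n`-th step parameter of the development layer: with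
`E = exp (M_θ Δx_{n+1}) * ⋯ * exp (M_θ Δx_N)`, `ψ̃_n (w) = ψ (w * E)`, `G` the Frobenius
gradient of `ψ̃_n` at `z_n (θ)`, and `φ (ϑ) = ψ̃_n (z_{n-1}(θ) * exp (M_ϑ Δx_n))`, one has
`(d φ)_θ ξ = ∑_j (Δx_n)_j · ⟨(d exp)_{(M_θ Δx_n)ᵀ} (z_{n-1}(θ)ᵀ * G), ξ_j⟩`, i.e. the
Frobenius gradient of `φ` at `θ` has `j`-th component
`(Δx_n)_j • (d exp)_{(M_θ Δx_n)ᵀ} (z_{n-1}(θ)ᵀ * G)`. -/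
theorem statement16 (d m N : ℕ) (x : ℕ → Fin d → ℝ)
    (θ : Fin d → Matrix (Fin m) (Fin m) ℝ) (n : ℕ) (h1 : 1 ≤ n) (hN : n ≤ N)
    (ψ : Matrix (Fin m) (Fin m) ℝ → ℝ)
    (E : Matrix (Fin m) (Fin m) ℝ)
    (hE : E = ((List.range (N - n)).map
      (fun j => NormedSpace.exp (devLayerM d m θ (x (n + 1 + j) - x (n + j))))).prod)
    (ψt : Matrix (Fin m) (Fin m) ℝ → ℝ) (hψt : ∀ w, ψt w = ψ (w * E))
    (hdiff : DifferentiableAt ℝ ψt (devLayerZ d m x n θ))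
    (G : Matrix (Fin m) (Fin m) ℝ)
    (hG : ∀ Y : Matrix (Fin m) (Fin m) ℝ,
      fderiv ℝ ψt (devLayerZ d m x n θ) Y = (Gᵀ * Y).trace)
    (φ : (Fin d → Matrix (Fin m) (Fin m) ℝ) → ℝ)
    (hφ : ∀ ϑ : Fin d → Matrix (Fin m) (Fin m) ℝ,
      φ ϑ = ψt (devLayerZ d m x (n - 1) θ *
        NormedSpace.exp (devLayerM d m ϑ (x n - x (n - 1)))))
    (ξ : Fin d → Matrix (Fin m) (Fin m) ℝ) :
    fderiv ℝ φ θ ξ =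
      ∑ j, (x n - x (n - 1)) j *
        ((fderiv ℝ NormedSpace.exp (devLayerM d m θ (x n - x (n - 1)))ᵀ
            ((devLayerZ d m x (n - 1) θ)ᵀ * G))ᵀ * ξ j).trace := by
  classical
  set v : Fin d → ℝ := x n - x (n - 1) with hv
  set A : Matrix (Fin m) (Fin m) ℝ := devLayerM d m θ v with hA
  set z : Matrix (Fin m) (Fin m) ℝ := devLayerZ d m x (n - 1) θ with hz
  set zn : Matrix (Fin m) (Fin m) ℝ := devLayerZ d m x n θ with hzn
  -- splitting of the ordered product
  have hsplit : zn = z * NormedSpace.exp A := by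
    obtain ⟨k, rfl⟩ : ∃ k, n = k + 1 := ⟨n - 1, by omega⟩
    simp only [hzn, hz, devLayerZ, Nat.add_sub_cancel, List.range_succ, List.map_append,
      List.prod_append, List.map_cons, List.map_nil, List.prod_cons, List.prod_nil, mul_one]
    rfl
  -- linear map `ϑ ↦ M_ϑ v`
  let Mlin : (Fin d → Matrix (Fin m) (Fin m) ℝ) →L[ℝ] Matrix (Fin m) (Fin m) ℝ :=
    ∑ j, v j • (ContinuousLinearMap.proj (R := ℝ)
      (φ := fun _ : Fin d => Matrix (Fin m) (Fin m) ℝ) j)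
  have hMlin : ∀ ϑ, Mlin ϑ = devLayerM d m ϑ v := by
    intro ϑ
    simp [Mlin, devLayerM]
  have hM : HasFDerivAt (fun ϑ : Fin d → Matrix (Fin m) (Fin m) ℝ => devLayerM d m ϑ v)
      Mlin θ := by
    have := Mlin.hasFDerivAt (x := θ)
    convert this using 1
    funext ϑ
    rw [hMlin]
  set L : Matrix (Fin m) (Fin m) ℝ →L[ℝ] Matrix (Fin m) (Fin m) ℝ
    := fderiv ℝ NormedSpace.exp A with hL
  have hexp : HasFDerivAt NormedSpace.exp L A := by
    rw [hL]; exact (hasFDerivAt_exp' A).differentiableAt.hasFDerivAt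
  have hinner : HasFDerivAt
      (fun ϑ : Fin d → Matrix (Fin m) (Fin m) ℝ =>
        z * NormedSpace.exp (devLayerM d m ϑ v))
      (z • (L.comp Mlin)) θ := by
    have h := (hexp.comp θ hM).const_mul z
    exact h
  have houter : HasFDerivAt ψt (fderiv ℝ ψt zn) (z * NormedSpace.exp A) := by
    rw [← hsplit]; exact hdiff.hasFDerivAt
  have htot : HasFDerivAt φ ((fderiv ℝ ψt zn).comp (z • (L.comp Mlin))) θ := by
    have hφ' : φ = fun ϑ => ψt (z * NormedSpace.exp (devLayerM d m ϑ v)) := funext hφ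
    rw [hφ']
    exact houter.comp θ hinner
  rw [htot.fderiv]
  have happ : ((fderiv ℝ ψt zn).comp (z • (L.comp Mlin))) ξ
      = fderiv ℝ ψt zn (z * L (Mlin ξ)) := by
    simp [smul_eq_mul]
  rw [happ, hG]
  have hMξ : Mlin ξ = ∑ j, v j • ξ j := by rw [hMlin]; rfl
  rw [hMξ, map_sum]
  simp only [map_smul]
  rw [Finset.mul_sum, Finset.mul_sum, Matrix.trace_sum]
  refine Finset.sum_congr rfl fun j _ => ?_
  rw [Matrix.mul_smul, Matrix.mul_smul, Matrix.trace_smul, smul_eq_mul]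
  congr 1
  have hkey := trace_fderiv_exp_comm (m := m) A (Gᵀ * z) (ξ j)
  calc (Gᵀ * (z * L (ξ j))).trace
      = ((Gᵀ * z) * fderiv ℝ NormedSpace.exp A (ξ j)).trace := by rw [hL, mul_assoc]
    _ = ((fderiv ℝ NormedSpace.exp Aᵀ ((Gᵀ * z)ᵀ))ᵀ * ξ j).trace := hkey
    _ = ((fderiv ℝ NormedSpace.exp Aᵀ (zᵀ * G))ᵀ * ξ j).trace := by
        rw [Matrix.transpose_mul, Matrix.transpose_transpose]
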